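/- Let G be the basic clock mechanism E-graph in ℝ³ with species ordering (T, P, C), vertices 0, e₁, e₂, e₁+e₂, e₃, and edges 0⇄e₁ (fluxes β₁,β₂), 0⇄e₂ (β₃,β₄), e₁+e₂⇄e₃ (β₅,β₆), and e₃→0 (β₇). Then F^eq(G) = {β ∈ ℝ_{>0}^7 : β₁ − β₂ = β₃ − β₄ = β₅ − β₆ = β₇}, and for every β ∈ F^eq(G), the flux γ on the E-graph G^max (obtained from G by adding the edge 0→e₁+e₂) given by γ_{0→e₁} = γ_{e₁→0} = β₂, γ_{0→e₂} = γ_{e₂→0} = β₄, γ_{e₁+e₂→e₃} = β₆ + β₇, γ_{e₃→e₁+e₂} = β₆, γ_{e₃→0} = β₇, γ_{0→e₁+e₂} = β₇ is vertex-balanced and (G,β) is dynamically equal to (G^max,γ). Hence F^dt(G) = F^eq(G). -/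

import Mathlib

open scoped Classical

noncomputable section

/-- Points of `ℝ³` (species ordering `(T, P, C)`). -/
abbrev Pt : Type := Fin 3 → ℝ

/-- A flux `γ` (zero outside `E`) is vertex-balanced on the edge set `E`. -/
def balanced (E : Finset (Pt × Pt)) (γ : Pt × Pt → ℝ) : Prop :=
  ∀ v : Pt, ∑ e ∈ E.filter (fun e => e.2 = v), γ e
    = ∑ e ∈ E.filter (fun e => e.1 = v), γ e

/-- `(E₁,γ₁)` and `(E₂,γ₂)` are dynamically equal (flux sense):
at every source vertex the flux-weighted displacement sums agree. -/
def dynEq (E₁ : Finset (Pt × Pt)) (γ₁ : Pt × Pt → ℝ)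
    (E₂ : Finset (Pt × Pt)) (γ₂ : Pt × Pt → ℝ) : Prop :=
  ∀ v : Pt, ∑ e ∈ E₁.filter (fun e => e.1 = v), γ₁ e • (e.2 - e.1)
    = ∑ e ∈ E₂.filter (fun e => e.1 = v), γ₂ e • (e.2 - e.1)

def e1 : Pt := ![1, 0, 0]
def e2 : Pt := ![0, 1, 0]
def e3 : Pt := ![0, 0, 1]

/-- The edges of the basic clock mechanism `G`:
`0⇄e₁` (β₁,β₂), `0⇄e₂` (β₃,β₄), `e₁+e₂⇄e₃` (β₅,β₆), `e₃→0` (β₇). -/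
def clockEdges : Finset (Pt × Pt) :=
  {(0, e1), (e1, 0), (0, e2), (e2, 0), (e1 + e2, e3), (e3, e1 + e2), (e3, 0)}

/-- `G^max` is obtained from `G` by adding the edge `0 → e₁+e₂`. -/
def clockMaxEdges : Finset (Pt × Pt) := insert (0, e1 + e2) clockEdges

/-- The equilibrium flux cone of the E-graph with edge set `E`. -/
def Feq (E : Finset (Pt × Pt)) : Set (Pt × Pt → ℝ) :=
  {β | (∀ e ∈ E, 0 < β e) ∧ ∑ e ∈ E, β e • (e.2 - e.1) = 0}

/-- The disguised toric flux cone: equilibrium-like fluxes on `E` realizable by a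
vertex-balanced flux on some E-graph that is dynamically equal to it. -/
def Fdt (E : Finset (Pt × Pt)) : Set (Pt × Pt → ℝ) :=
  {β | (∀ e ∈ E, 0 < β e) ∧
    ∃ (EH : Finset (Pt × Pt)) (γ : Pt × Pt → ℝ),
      (∀ e ∈ EH, 0 < γ e) ∧ (∀ e ∉ EH, γ e = 0) ∧
      balanced EH γ ∧ dynEq E β EH γ}

/-- The explicit vertex-balanced flux on `G^max` associated with `β ∈ F^eq(G)`:
`γ_{0→e₁} = γ_{e₁→0} = β₂`, `γ_{0→e₂} = γ_{e₂→0} = β₄`, `γ_{e₁+e₂→e₃} = β₆ + β₇`,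
`γ_{e₃→e₁+e₂} = β₆`, `γ_{e₃→0} = β₇`, `γ_{0→e₁+e₂} = β₇`. -/
def clockGamma (β : Pt × Pt → ℝ) : Pt × Pt → ℝ := fun e =>
  if e = (0, e1) then β (e1, 0)
  else if e = (e1, 0) then β (e1, 0)
  else if e = (0, e2) then β (e2, 0)
  else if e = (e2, 0) then β (e2, 0)
  else if e = (e1 + e2, e3) then β (e3, e1 + e2) + β (e3, 0)
  else if e = (e3, e1 + e2) then β (e3, e1 + e2)
  else if e = (e3, 0) then β (e3, 0)
  else if e = (0, e1 + e2) then β (e3, 0)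
  else 0

lemma vne {a b : Pt} (i : Fin 3) (h : a i ≠ b i) : a ≠ b := fun e => h (congrFun e i)

@[simp] lemma h01 : (0:Pt) ≠ e1 := vne 0 (by norm_num [e1])
@[simp] lemma h02 : (0:Pt) ≠ e2 := vne 1 (by norm_num [e2])
@[simp] lemma h012 : (0:Pt) ≠ e1 + e2 := vne 0 (by norm_num [e1, e2])
@[simp] lemma h03 : (0:Pt) ≠ e3 := vne 2 (by norm_num [e3]; exact zero_ne_one)
@[simp] lemma h12 : e1 ≠ e2 := vne 0 (by norm_num [e1, e2])
@[simp] lemma h112 : e1 ≠ e1 + e2 := vne 1 (by norm_num [e1, e2])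
@[simp] lemma h13 : e1 ≠ e3 := vne 0 (by norm_num [e1, e3])
@[simp] lemma h212 : e2 ≠ e1 + e2 := vne 0 (by norm_num [e1, e2])
@[simp] lemma h23 : e2 ≠ e3 := vne 1 (by norm_num [e2, e3])
@[simp] lemma h123 : e1 + e2 ≠ e3 := vne 0 (by norm_num [e1, e2, e3])
@[simp] lemma h01' : e1 ≠ (0:Pt) := h01.symm
@[simp] lemma h02' : e2 ≠ (0:Pt) := h02.symm
@[simp] lemma h012' : e1 + e2 ≠ (0:Pt) := h012.symm
@[simp] lemma h03' : e3 ≠ (0:Pt) := h03.symm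
@[simp] lemma h12' : e2 ≠ e1 := h12.symm
@[simp] lemma h112' : e1 + e2 ≠ e1 := h112.symm
@[simp] lemma h13' : e3 ≠ e1 := h13.symm
@[simp] lemma h212' : e1 + e2 ≠ e2 := h212.symm
@[simp] lemma h23' : e3 ≠ e2 := h23.symm
@[simp] lemma h123' : e3 ≠ e1 + e2 := h123.symm

lemma clockEdges_sum {M : Type*} [AddCommMonoid M] (f : Pt × Pt → M) :
    ∑ e ∈ clockEdges, f e = f (0,e1) + f (e1,0) + f (0,e2) + f (e2,0)
      + f (e1+e2,e3) + f (e3,e1+e2) + f (e3,0) := by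
  rw [clockEdges]
  rw [Finset.sum_insert (by simp [Prod.ext_iff]), Finset.sum_insert (by simp [Prod.ext_iff]),
    Finset.sum_insert (by simp [Prod.ext_iff]), Finset.sum_insert (by simp [Prod.ext_iff]),
    Finset.sum_insert (by simp [Prod.ext_iff]), Finset.sum_insert (by simp [Prod.ext_iff]),
    Finset.sum_singleton]
  abel

lemma clockMaxEdges_sum {M : Type*} [AddCommMonoid M] (f : Pt × Pt → M) :
    ∑ e ∈ clockMaxEdges, f e = f (0,e1+e2) + (f (0,e1) + f (e1,0) + f (0,e2) + f (e2,0)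
      + f (e1+e2,e3) + f (e3,e1+e2) + f (e3,0)) := by
  rw [clockMaxEdges, Finset.sum_insert (by simp [clockEdges, Prod.ext_iff]), clockEdges_sum]

@[simp] lemma g1 (β : Pt × Pt → ℝ) : clockGamma β (0, e1) = β (e1, 0) := by
  simp [clockGamma, Prod.ext_iff]
@[simp] lemma g2 (β : Pt × Pt → ℝ) : clockGamma β (e1, 0) = β (e1, 0) := by
  simp [clockGamma, Prod.ext_iff]
@[simp] lemma g3 (β : Pt × Pt → ℝ) : clockGamma β (0, e2) = β (e2, 0) := by
  simp [clockGamma, Prod.ext_iff]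
@[simp] lemma g4 (β : Pt × Pt → ℝ) : clockGamma β (e2, 0) = β (e2, 0) := by
  simp [clockGamma, Prod.ext_iff]
@[simp] lemma g5 (β : Pt × Pt → ℝ) : clockGamma β (e1+e2, e3) = β (e3, e1+e2) + β (e3, 0) := by
  simp [clockGamma, Prod.ext_iff]
@[simp] lemma g6 (β : Pt × Pt → ℝ) : clockGamma β (e3, e1+e2) = β (e3, e1+e2) := by
  simp [clockGamma, Prod.ext_iff]
@[simp] lemma g7 (β : Pt × Pt → ℝ) : clockGamma β (e3, 0) = β (e3, 0) := by
  simp [clockGamma, Prod.ext_iff]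
@[simp] lemma g8 (β : Pt × Pt → ℝ) : clockGamma β (0, e1+e2) = β (e3, 0) := by
  simp [clockGamma, Prod.ext_iff]

@[simp] lemma e1c0 : e1 0 = 1 := rfl
@[simp] lemma e1c1 : e1 1 = 0 := rfl
@[simp] lemma e1c2 : e1 2 = 0 := rfl
@[simp] lemma e2c0 : e2 0 = 0 := rfl
@[simp] lemma e2c1 : e2 1 = 1 := rfl
@[simp] lemma e2c2 : e2 2 = 0 := rfl
@[simp] lemma e3c0 : e3 0 = 0 := rfl
@[simp] lemma e3c1 : e3 1 = 0 := rfl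
@[simp] lemma e3c2 : e3 2 = 1 := rfl

lemma feq_iff (β : Pt × Pt → ℝ) :
    β ∈ Feq clockEdges ↔
      ((∀ e ∈ clockEdges, 0 < β e) ∧
       β (0, e1) - β (e1, 0) = β (0, e2) - β (e2, 0) ∧
       β (0, e2) - β (e2, 0) = β (e1 + e2, e3) - β (e3, e1 + e2) ∧
       β (e1 + e2, e3) - β (e3, e1 + e2) = β (e3, 0)) := by
  rw [Feq, Set.mem_setOf_eq, clockEdges_sum, and_congr_right_iff]
  intro _
  constructor
  · intro h
    have h0 := congrFun h 0
    have h1 := congrFun h 1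
    have h2 := congrFun h 2
    simp at h0 h1 h2
    refine ⟨by linarith, by linarith, by linarith⟩
  · rintro ⟨ha, hb, hc⟩
    funext i
    fin_cases i <;> simp <;> linarith

lemma mem_clockEdges_self1 : ((e1,0) : Pt × Pt) ∈ clockEdges := by simp [clockEdges]
lemma mem_clockEdges_self2 : ((e2,0) : Pt × Pt) ∈ clockEdges := by simp [clockEdges]
lemma mem_clockEdges_self3 : ((e3,e1+e2) : Pt × Pt) ∈ clockEdges := by simp [clockEdges]
lemma mem_clockEdges_self4 : ((e3,0) : Pt × Pt) ∈ clockEdges := by simp [clockEdges]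

lemma gamma_pos (β : Pt × Pt → ℝ) (hpos : ∀ e ∈ clockEdges, 0 < β e) :
    ∀ e ∈ clockMaxEdges, 0 < clockGamma β e := by
  intro e he
  have h1 := hpos _ mem_clockEdges_self1
  have h2 := hpos _ mem_clockEdges_self2
  have h3 := hpos _ mem_clockEdges_self3
  have h4 := hpos _ mem_clockEdges_self4
  simp only [clockMaxEdges, clockEdges, Finset.mem_insert, Finset.mem_singleton] at he
  rcases he with h|h|h|h|h|h|h|h <;> subst h <;> simp <;> positivity

lemma gamma_zero (β : Pt × Pt → ℝ) :
    ∀ e ∉ clockMaxEdges, clockGamma β e = 0 := by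
  intro e he
  simp only [clockMaxEdges, clockEdges, Finset.mem_insert, Finset.mem_singleton, not_or] at he
  obtain ⟨k8, k1, k2, k3, k4, k5, k6, k7⟩ := he
  simp [clockGamma, k1, k2, k3, k4, k5, k6, k7, k8]

lemma gamma_balanced (β : Pt × Pt → ℝ) : balanced clockMaxEdges (clockGamma β) := by
  intro v
  rw [Finset.sum_filter, Finset.sum_filter, clockMaxEdges_sum, clockMaxEdges_sum]
  by_cases hv0 : v = 0
  · subst hv0; simp; ring
  by_cases hv1 : v = e1
  · subst hv1; simp [Ne.symm hv0]
  by_cases hv2 : v = e2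
  · subst hv2; simp [Ne.symm hv0]
  by_cases hv3 : v = e1 + e2
  · subst hv3; simp [Ne.symm hv0]; ring
  by_cases hv4 : v = e3
  · subst hv4; simp [Ne.symm hv0]
  · simp [Ne.symm hv0, Ne.symm hv1, Ne.symm hv2, Ne.symm hv3, Ne.symm hv4]

lemma gamma_dynEq (β : Pt × Pt → ℝ) (hβ : β ∈ Feq clockEdges) :
    dynEq clockEdges β clockMaxEdges (clockGamma β) := by
  obtain ⟨-, ha, hb, hc⟩ := (feq_iff β).1 hβ
  intro v
  rw [Finset.sum_filter, Finset.sum_filter, clockEdges_sum, clockMaxEdges_sum]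
  by_cases hv0 : v = 0
  · subst hv0
    simp
    funext i
    fin_cases i <;> simp <;> linarith
  by_cases hv1 : v = e1
  · subst hv1; simp [Ne.symm hv0]
  by_cases hv2 : v = e2
  · subst hv2; simp [Ne.symm hv0]
  by_cases hv3 : v = e1 + e2
  · subst hv3
    simp [Ne.symm hv0]
    have h5 : β (e1 + e2, e3) = β (e3, e1 + e2) + β (e3, 0) := by linarith
    rw [h5]
  by_cases hv4 : v = e3
  · subst hv4; simp [Ne.symm hv0]
  · simp [Ne.symm hv0, Ne.symm hv1, Ne.symm hv2, Ne.symm hv3, Ne.symm hv4]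

lemma balanced_sum_zero (E : Finset (Pt × Pt)) (γ : Pt × Pt → ℝ)
    (h : balanced E γ) : ∑ e ∈ E, γ e • (e.2 - e.1) = 0 := by
  have hsplit : ∑ e ∈ E, γ e • (e.2 - e.1)
      = ∑ e ∈ E, γ e • e.2 - ∑ e ∈ E, γ e • e.1 := by
    rw [← Finset.sum_sub_distrib]
    exact Finset.sum_congr rfl fun e _ => smul_sub _ _ _
  rw [hsplit, sub_eq_zero]
  set W := E.image Prod.fst ∪ E.image Prod.snd with hW
  have h2 : ∑ e ∈ E, γ e • e.2
      = ∑ v ∈ W, ∑ e ∈ E.filter (fun e => e.2 = v), γ e • e.2 :=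
    (Finset.sum_fiberwise_of_maps_to
      (fun e he => Finset.mem_union_right _ (Finset.mem_image_of_mem _ he)) _).symm
  have h1 : ∑ e ∈ E, γ e • e.1
      = ∑ v ∈ W, ∑ e ∈ E.filter (fun e => e.1 = v), γ e • e.1 :=
    (Finset.sum_fiberwise_of_maps_to
      (fun e he => Finset.mem_union_left _ (Finset.mem_image_of_mem _ he)) _).symm
  rw [h1, h2]
  refine Finset.sum_congr rfl fun v _ => ?_
  have hv2 : ∑ e ∈ E.filter (fun e => e.2 = v), γ e • e.2
      = (∑ e ∈ E.filter (fun e => e.2 = v), γ e) • v := by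
    rw [Finset.sum_smul]
    exact Finset.sum_congr rfl fun e he => by rw [(Finset.mem_filter.1 he).2]
  have hv1 : ∑ e ∈ E.filter (fun e => e.1 = v), γ e • e.1
      = (∑ e ∈ E.filter (fun e => e.1 = v), γ e) • v := by
    rw [Finset.sum_smul]
    exact Finset.sum_congr rfl fun e he => by rw [(Finset.mem_filter.1 he).2]
  rw [hv1, hv2, h v]

lemma dynEq_sum_eq (E E' : Finset (Pt × Pt)) (β γ : Pt × Pt → ℝ)
    (h : dynEq E β E' γ) :
    ∑ e ∈ E, β e • (e.2 - e.1) = ∑ e ∈ E', γ e • (e.2 - e.1) := by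
  set W := E.image Prod.fst ∪ E'.image Prod.fst with hW
  rw [← Finset.sum_fiberwise_of_maps_to (g := Prod.fst) (t := W)
      (fun e he => Finset.mem_union_left _ (Finset.mem_image_of_mem _ he))
      (fun e => β e • (e.2 - e.1)),
    ← Finset.sum_fiberwise_of_maps_to (g := Prod.fst) (t := W)
      (fun e he => Finset.mem_union_right _ (Finset.mem_image_of_mem _ he))
      (fun e => γ e • (e.2 - e.1))]
  exact Finset.sum_congr rfl fun v _ => h v


/-- For the basic clock mechanism `G`:
`F^eq(G) = {β > 0 : β₁ − β₂ = β₃ − β₄ = β₅ − β₆ = β₇}`; for every `β ∈ F^eq(G)` the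
explicit flux `clockGamma β` on `G^max` is positive, vertex-balanced, and dynamically
equal to `(G,β)`; hence `F^dt(G) = F^eq(G)`. -/
theorem stmt_16 :
    (∀ β : Pt × Pt → ℝ,
      β ∈ Feq clockEdges ↔
        ((∀ e ∈ clockEdges, 0 < β e) ∧
         β (0, e1) - β (e1, 0) = β (0, e2) - β (e2, 0) ∧
         β (0, e2) - β (e2, 0) = β (e1 + e2, e3) - β (e3, e1 + e2) ∧
         β (e1 + e2, e3) - β (e3, e1 + e2) = β (e3, 0))) ∧
    (∀ β ∈ Feq clockEdges,
      (∀ e ∈ clockMaxEdges, 0 < clockGamma β e) ∧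
      (∀ e ∉ clockMaxEdges, clockGamma β e = 0) ∧
      balanced clockMaxEdges (clockGamma β) ∧
      dynEq clockEdges β clockMaxEdges (clockGamma β)) ∧
    Fdt clockEdges = Feq clockEdges := by
  refine ⟨feq_iff, ?_, ?_⟩
  · intro β hβ
    exact ⟨gamma_pos β hβ.1, gamma_zero β, gamma_balanced β, gamma_dynEq β hβ⟩
  · ext β
    constructor
    · rintro ⟨hpos, EH, γ, hγpos, hγ0, hbal, hdyn⟩
      exact ⟨hpos, by rw [dynEq_sum_eq _ _ _ _ hdyn]; exact balanced_sum_zero EH γ hbal⟩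
    · intro hβ
      exact ⟨hβ.1, clockMaxEdges, clockGamma β, gamma_pos β hβ.1, gamma_zero β,
        gamma_balanced β, gamma_dynEq β hβ⟩

end
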